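/- Sorting jobs in nonincreasing order of the ratio w_j/p_j minimizes ∑_j w_j C_j over all permutations on a single machine (Smith's rule). -/
import Mathlib


/-- Smith's rule — nonincreasing w/p order minimizes ∑ w_j C_j. -/
theorem stmt2 {J : Type*} [Fintype J] [DecidableEq J] (p w : J → ℝ)
    (hp : ∀ j, 0 < p j) (hw : ∀ j, 0 ≤ w j)
    (σ : J ≃ Fin (Fintype.card J))
    (hsorted : ∀ i j : J, σ i ≤ σ j → w j / p j ≤ w i / p i)
    (τ : J ≃ Fin (Fintype.card J)) :
    ∑ j, w j * ∑ i ∈ Finset.univ.filter (fun i => σ i ≤ σ j), p i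
      ≤ ∑ j, w j * ∑ i ∈ Finset.univ.filter (fun i => τ i ≤ τ j), p i := by
  have key : ∀ (π : J ≃ Fin (Fintype.card J)),
      ∑ j, w j * ∑ i ∈ Finset.univ.filter (fun i => π i ≤ π j), p i
      = ∑ j, ∑ i, (if π i ≤ π j then p i * w j else 0) := by
    intro π
    refine Finset.sum_congr rfl fun j _ => ?_
    rw [Finset.mul_sum, ← Finset.sum_filter]
    exact Finset.sum_congr rfl fun i _ => mul_comm _ _
  rw [key σ, key τ]
  have double : ∀ (π : J ≃ Fin (Fintype.card J)),
      2 * ∑ j, ∑ i, (if π i ≤ π j then p i * w j else 0)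
      = ∑ j, ∑ i, ((if π i ≤ π j then p i * w j else 0)
          + (if π j ≤ π i then p j * w i else 0)) := by
    intro π
    rw [two_mul]
    simp_rw [Finset.sum_add_distrib]
    congr 1
    rw [Finset.sum_comm]
  have h2 : 2 * ∑ j, ∑ i, (if σ i ≤ σ j then p i * w j else 0)
      ≤ 2 * ∑ j, ∑ i, (if τ i ≤ τ j then p i * w j else 0) := by
    rw [double σ, double τ]
    refine Finset.sum_le_sum fun j _ => Finset.sum_le_sum fun i _ => ?_
    by_cases hij : i = j
    · subst hij; simp
    · have hσ : σ i ≠ σ j := fun h => hij (σ.injective h)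
      have hτ : τ i ≠ τ j := fun h => hij (τ.injective h)
      have hmin1 : p i * w j ≤ p j * w i → p i * w j ≤
          (if τ i ≤ τ j then p i * w j else 0) + (if τ j ≤ τ i then p j * w i else 0) := by
        intro hle
        rcases le_total (τ i) (τ j) with h | h
        · rw [if_pos h, if_neg (fun h' => hτ (le_antisymm h h'))]; linarith
        · rw [if_neg (fun h' => hτ (le_antisymm h' h)), if_pos h]; linarith
      have hmin2 : p j * w i ≤ p i * w j → p j * w i ≤
          (if τ i ≤ τ j then p i * w j else 0) + (if τ j ≤ τ i then p j * w i else 0) := by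
        intro hle
        rcases le_total (τ i) (τ j) with h | h
        · rw [if_pos h, if_neg (fun h' => hτ (le_antisymm h h'))]; linarith
        · rw [if_neg (fun h' => hτ (le_antisymm h' h)), if_pos h]; linarith
      rcases le_total (σ i) (σ j) with h | h
      · have hr := hsorted i j h
        have hle : p i * w j ≤ p j * w i := by
          rw [div_le_div_iff₀ (hp j) (hp i)] at hr; nlinarith
        rw [if_pos h, if_neg (fun h' => hσ (le_antisymm h h'))]
        simpa using hmin1 hle
      · have hr := hsorted j i h
        have hle : p j * w i ≤ p i * w j := by
          rw [div_le_div_iff₀ (hp i) (hp j)] at hr; nlinarith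
        rw [if_neg (fun h' => hσ (le_antisymm h' h)), if_pos h]
        simpa using hmin2 hle
  linarith
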